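/- (Theorem 1, case i_m = n + m.) Assume no two ghost positions are consecutive, i.e. ι k + 1 < ι (k+1) for all k with k + 1 ≤ m − 1, and assume ι (m−1) = n + m. Then for every v : ℝ and every w : ℕ → ℝ there exists a multivariate polynomial p : MvPolynomial (Fin (n+m)) ℝ with total degree at most 2*m such that for every choice of input bits b : ℕ → ℤ with b k ∈ {0,1} for all k and every c implementing the m-plus-bits interface for b, one has v + ∑_{i=1}^{n} w i * (φ* i : ℝ) = MvPolynomial.eval (fun t : Fin (n+m) => ((φ (t + 1)) : ℝ)) p. -/

import Mathlib

set_option maxHeartbeats 1000000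


/-- `c` implements the `m`-plus-bits challenge interface for input bits `b`,
with ghost-bit positions `ι 0 < ι 1 < ... < ι (m-1)`, for an `n`-stage PUF. -/
def MPlusBitsInterface (n m : ℕ) (hm : 1 ≤ m) (ι : Fin m → ℕ)
    (b c : ℕ → ℤ) : Prop :=
  (∀ i, 1 ≤ i → i < ι ⟨0, hm⟩ → c i = b i) ∧
  (∀ k (hk : k + 1 ≤ m - 1), ∀ i,
    ι ⟨k, by omega⟩ < i → i < ι ⟨k + 1, by omega⟩ → c (i - (k + 1)) = b i) ∧
  (∀ i, ι ⟨m - 1, by omega⟩ < i → i ≤ n + m → c (i - m) = b i)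


namespace Stmt8Aux
open Finset

variable {m : ℕ} {ι : Fin m → ℕ}

def dd (ι : Fin m → ℕ) (t : ℕ) : ℕ :=
  (Finset.univ.filter (fun k : Fin m => ι k ≤ t + (k : ℕ))).card

lemma gap (hmono : StrictMono ι) (a b : Fin m) (hab : (a : ℕ) ≤ b) :
    ι a + ((b : ℕ) - a) ≤ ι b := by
  obtain ⟨j, hj⟩ := Nat.exists_eq_add_of_le hab
  induction j generalizing b with
  | zero =>
    have : a = b := Fin.ext (by omega)
    subst this; omega
  | succ j ih =>
    have hb' : (a : ℕ) + j < m := by omega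
    have hv : ((⟨(a : ℕ) + j, hb'⟩ : Fin m) : ℕ) = (a : ℕ) + j := rfl
    have h1 := ih ⟨(a : ℕ) + j, hb'⟩ (by omega) (by omega)
    have h2 : (⟨(a : ℕ) + j, hb'⟩ : Fin m) < b := by
      rw [Fin.lt_def]; omega
    have := hmono h2
    rw [hv] at h1
    omega

lemma dd_le (ι : Fin m → ℕ) (t : ℕ) : dd ι t ≤ m := by
  calc dd ι t ≤ Finset.univ.card := Finset.card_filter_le _ _
  _ = m := by simp

lemma mem_dd (hmono : StrictMono ι) (t : ℕ) (k : Fin m) :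
    (k : ℕ) < dd ι t ↔ ι k ≤ t + k := by
  have hdc : ∀ k k' : Fin m, k' ≤ k → ι k ≤ t + k → ι k' ≤ t + k' := by
    intro k k' hle h
    have := gap hmono k' k hle
    omega
  constructor
  · intro h
    by_contra hk
    have hsub : (Finset.univ.filter (fun k' : Fin m => ι k' ≤ t + (k' : ℕ))) ⊆ Finset.Iio k := by
      intro k' hk'
      simp only [mem_filter] at hk'
      simp only [Finset.mem_Iio]
      by_contra hlt
      exact hk (hdc k' k (le_of_not_gt hlt) hk'.2)
    have := Finset.card_le_card hsub
    rw [Fin.card_Iio] at this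
    unfold dd at h
    omega
  · intro h
    have hsub : Finset.Iic k ⊆ (Finset.univ.filter (fun k' : Fin m => ι k' ≤ t + (k' : ℕ))) := by
      intro k' hk'
      simp only [Finset.mem_Iic] at hk'
      simp only [mem_filter, Finset.mem_univ, true_and]
      exact hdc k k' hk' h
    have := Finset.card_le_card hsub
    rw [Fin.card_Iic] at this
    unfold dd
    omega

lemma dd_mono (ι : Fin m → ℕ) (t : ℕ) : dd ι t ≤ dd ι (t + 1) := by
  apply Finset.card_le_card
  intro k hk
  simp only [mem_filter, Finset.mem_univ, true_and] at *
  omega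

lemma sig_not_ghost (hmono : StrictMono ι) (t : ℕ) (k : Fin m) :
    ι k ≠ t + dd ι t := by
  rcases lt_or_ge (k : ℕ) (dd ι t) with h | h
  · have := (mem_dd hmono t k).1 h
    omega
  · have h2 : ¬ ι k ≤ t + (k : ℕ) := fun hc => absurd ((mem_dd hmono t k).2 hc) (by omega)
    omega


lemma dd_step (hmono : StrictMono ι)
    (hnc : ∀ (k : ℕ) (hk : k + 1 < m), ι ⟨k, by omega⟩ + 1 < ι ⟨k + 1, hk⟩) (t : ℕ) :
    dd ι (t + 1) = dd ι t ∨
    (dd ι (t + 1) = dd ι t + 1 ∧ ∃ h : dd ι t < m, ι ⟨dd ι t, h⟩ = t + 1 + dd ι t) := by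
  have h1 := dd_mono ι t
  have h2 : dd ι (t + 1) ≤ dd ι t + 1 := by
    by_contra hcon
    push_neg at hcon
    have hm2 : dd ι t + 1 < m := lt_of_lt_of_le hcon (dd_le ι (t+1))
    set j := dd ι t with hj
    have e1 : ι ⟨j, by omega⟩ = t + 1 + j := by
      have a1 := (mem_dd hmono (t+1) ⟨j, by omega⟩).1 (by simpa using by omega)
      have a2 : ¬ ι (⟨j, by omega⟩ : Fin m) ≤ t + j :=
        fun hc => absurd ((mem_dd hmono t ⟨j, by omega⟩).2 (by simpa using hc)) (by simp; omega)
      simp only [Fin.val_mk] at a1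
      omega
    have e2 : ι ⟨j + 1, hm2⟩ = t + 2 + j := by
      have a1 := (mem_dd hmono (t+1) ⟨j+1, hm2⟩).1 (by simpa using by omega)
      have a2 : ¬ ι (⟨j + 1, hm2⟩ : Fin m) ≤ t + (j + 1) :=
        fun hc => absurd ((mem_dd hmono t ⟨j+1, hm2⟩).2 (by simpa using hc)) (by simp; omega)
      simp only [Fin.val_mk] at a1
      omega
    have := hnc j hm2
    omega
  rcases Nat.lt_or_ge (dd ι t) (dd ι (t+1)) with h | h
  · right
    have hm1 : dd ι t < m := lt_of_lt_of_le h (dd_le ι (t+1))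
    refine ⟨by omega, hm1, ?_⟩
    have a1 := (mem_dd hmono (t+1) ⟨dd ι t, hm1⟩).1 (by simpa using by omega)
    have a2 : ¬ ι (⟨dd ι t, hm1⟩ : Fin m) ≤ t + dd ι t :=
      fun hc => absurd ((mem_dd hmono t ⟨dd ι t, hm1⟩).2 (by simpa using hc)) (by simp)
    simp only [Fin.val_mk] at a1
    omega
  · left; omega

lemma dd_top {n : ℕ} (hmono : StrictMono ι) (hm : 1 ≤ m)
    (hlast1 : ι ⟨m - 1, by omega⟩ = n + m) : dd ι (n + 1) = m := by
  have hall : ∀ k : Fin m, ι k ≤ n + 1 + (k : ℕ) := by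
    intro k
    have hle : (k : ℕ) ≤ (⟨m - 1, by omega⟩ : Fin m) := by
      simp only [Fin.val_mk]; omega
    have := gap hmono k ⟨m - 1, by omega⟩ hle
    simp only [Fin.val_mk] at this
    have hk := k.isLt
    omega
  have := (mem_dd hmono (n+1) ⟨m - 1, by omega⟩).2 (hall _)
  have := dd_le ι (n + 1)
  simp only [Fin.val_mk] at *
  omega

lemma c_eq {n : ℕ} {b c : ℕ → ℤ} (hm : 1 ≤ m) (hmono : StrictMono ι)
    (hc : MPlusBitsInterface n m hm ι b c) (t : ℕ) (ht1 : 1 ≤ t) (htn : t ≤ n) :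
    c t = b (t + dd ι t) := by
  obtain ⟨h1, h2, h3⟩ := hc
  set j := dd ι t with hj
  have hjm : j ≤ m := dd_le ι t
  rcases Nat.eq_zero_or_pos j with h0 | hpos
  · have a2 : ¬ ι (⟨0, hm⟩ : Fin m) ≤ t + (0 : ℕ) :=
      fun hcon => absurd ((mem_dd hmono t ⟨0, hm⟩).2 (by simpa using hcon)) (by simp [← hj, h0])
    rw [h0, Nat.add_zero]
    exact h1 t ht1 (by omega)
  rcases Nat.lt_or_ge j m with hjlt | hjge
  · -- 0 < j < m, use middle clause with k = j - 1
    have a1 := (mem_dd hmono t ⟨j - 1, by omega⟩).1 (by simp only [Fin.val_mk]; omega)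
    simp only [Fin.val_mk] at a1
    have a2 : ¬ ι (⟨j, hjlt⟩ : Fin m) ≤ t + j :=
      fun hcon => absurd ((mem_dd hmono t ⟨j, hjlt⟩).2 (by simpa using hcon)) (by simp; omega)
    have key := h2 (j - 1) (by omega) (t + j) (by omega)
      (by
        have he : (⟨j - 1 + 1, by omega⟩ : Fin m) = ⟨j, hjlt⟩ := Fin.ext (by simp; omega)
        rw [he]
        omega)
    simpa [show t + j - (j - 1 + 1) = t by omega, show j - 1 + 1 = j by omega] using key
  · -- j = m, use last clause
    have hjm' : j = m := le_antisymm hjm hjge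
    have a1 := (mem_dd hmono t ⟨m - 1, by omega⟩).1 (by simp only [Fin.val_mk]; omega)
    simp only [Fin.val_mk] at a1
    have key := h3 (t + m) (by omega) (by omega)
    simpa [hjm', show t + m - m = t by omega] using key

lemma star {n : ℕ} {b c : ℕ → ℤ} (hm : 1 ≤ m) (hmono : StrictMono ι)
    (hnc : ∀ (k : ℕ) (hk : k + 1 < m), ι ⟨k, by omega⟩ + 1 < ι ⟨k + 1, hk⟩)
    (hlast1 : ι ⟨m - 1, by omega⟩ = n + m)
    (hc : MPlusBitsInterface n m hm ι b c) :
    ∀ i, 1 ≤ i → i ≤ n + 1 →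
      (∏ k ∈ Finset.Icc i n, (2 * c k - 1)) *
        ∏ k ∈ Finset.univ.filter (fun k : Fin m => i + dd ι i ≤ ι k), (2 * b (ι k) - 1)
      = ∏ k ∈ Finset.Icc (i + dd ι i) (n + m), (2 * b k - 1) := by
  have hub : ∀ k : Fin m, ι k ≤ n + m := by
    intro k
    have hle : k ≤ (⟨m - 1, by omega⟩ : Fin m) := by
      rw [Fin.le_def]; simp only [Fin.val_mk]; have := k.isLt; omega
    have := hmono.monotone hle
    omega
  have base : (∏ k ∈ Finset.Icc (n+1) n, (2 * c k - 1)) *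
        ∏ k ∈ Finset.univ.filter (fun k : Fin m => (n+1) + dd ι (n+1) ≤ ι k), (2 * b (ι k) - 1)
      = ∏ k ∈ Finset.Icc ((n+1) + dd ι (n+1)) (n + m), (2 * b k - 1) := by
    rw [dd_top hmono hm hlast1]
    rw [Finset.Icc_eq_empty (by omega), Finset.Icc_eq_empty (by omega)]
    rw [Finset.filter_false_of_mem (fun k _ => by have := hub k; omega)]
    simp
  -- descending induction
  have main : ∀ j, j ≤ n → (∏ k ∈ Finset.Icc (n + 1 - j) n, (2 * c k - 1)) *
        ∏ k ∈ Finset.univ.filter (fun k : Fin m => (n + 1 - j) + dd ι (n + 1 - j) ≤ ι k),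
          (2 * b (ι k) - 1)
      = ∏ k ∈ Finset.Icc ((n + 1 - j) + dd ι (n + 1 - j)) (n + m), (2 * b k - 1) := by
    intro j
    induction j with
    | zero => intro _; simpa using base
    | succ j ih =>
      intro hjn
      have IH := ih (by omega)
      set i := n - j with hi
      have hi1 : 1 ≤ i := by omega
      have hisucc : n + 1 - j = i + 1 := by omega
      rw [hisucc] at IH
      have hii : n + 1 - (j + 1) = i := by omega
      rw [hii]
      have hin : i ≤ n := by omega
      have hdle : dd ι i ≤ m := dd_le ι i
      have hsigle : i + dd ι i ≤ n + m := by omega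
      have hci : c i = b (i + dd ι i) := c_eq hm hmono hc i hi1 hin
      have hicc : Finset.Icc i n = insert i (Finset.Icc (i+1) n) := by
        ext x; simp only [Finset.mem_Icc, Finset.mem_insert]; omega
      have hnmem : i ∉ Finset.Icc (i+1) n := by simp
      rcases dd_step hmono hnc i with heq | ⟨heq, hklt, hkval⟩
      · -- no ghost between
        have hfil : Finset.univ.filter (fun k : Fin m => i + dd ι i ≤ ι k)
            = Finset.univ.filter (fun k : Fin m => (i + 1) + dd ι (i + 1) ≤ ι k) := by
          apply Finset.filter_congr
          intro k _
          have := sig_not_ghost hmono i k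
          rw [heq]
          constructor <;> intro <;> simp_all <;> omega
        have hicc2 : Finset.Icc (i + dd ι i) (n + m)
            = insert (i + dd ι i) (Finset.Icc ((i+1) + dd ι (i+1)) (n + m)) := by
          rw [heq]
          ext x; simp only [Finset.mem_Icc, Finset.mem_insert]; omega
        have hnmem2 : i + dd ι i ∉ Finset.Icc ((i+1) + dd ι (i+1)) (n + m) := by
          rw [heq]; simp
        rw [hicc, Finset.prod_insert hnmem, hfil, hicc2, Finset.prod_insert hnmem2, ← IH, hci]
        ring
      · -- one ghost at position i + dd ι i + 1
        set k0 : Fin m := ⟨dd ι i, hklt⟩ with hk0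
        have hfil : Finset.univ.filter (fun k : Fin m => i + dd ι i ≤ ι k)
            = insert k0 (Finset.univ.filter (fun k : Fin m => (i + 1) + dd ι (i + 1) ≤ ι k)) := by
          ext k
          simp only [Finset.mem_filter, Finset.mem_univ, true_and, Finset.mem_insert]
          constructor
          · intro hk
            have hne := sig_not_ghost hmono i k
            rcases Nat.lt_or_ge (ι k) ((i + 1) + dd ι (i + 1)) with hlt | hge
            · left
              apply hmono.injective
              rw [hkval]
              omega
            · right; exact hge
          · intro hk
            rcases hk with hk | hk
            · rw [hk, hkval]; omega
            · omega
        have hk0mem : k0 ∉ Finset.univ.filter (fun k : Fin m => (i + 1) + dd ι (i + 1) ≤ ι k) := by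
          simp only [Finset.mem_filter, Finset.mem_univ, true_and, not_le]
          rw [hkval]; omega
        have hub0 : ι k0 ≤ n + m := hub k0
        have hicc2 : Finset.Icc (i + dd ι i) (n + m)
            = insert (i + dd ι i) (insert (i + dd ι i + 1)
                (Finset.Icc ((i+1) + dd ι (i+1)) (n + m))) := by
          ext x
          simp only [Finset.mem_Icc, Finset.mem_insert]
          constructor
          · intro hx; omega
          · intro hx; rcases hx with hx | hx | hx
            · omega
            · constructor
              · omega
              · rw [hx]; omega
            · omega
        have hnmem2 : i + dd ι i ∉ insert (i + dd ι i + 1)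
            (Finset.Icc ((i+1) + dd ι (i+1)) (n + m)) := by
          simp only [Finset.mem_insert, Finset.mem_Icc]; omega
        have hnmem3 : i + dd ι i + 1 ∉ Finset.Icc ((i+1) + dd ι (i+1)) (n + m) := by
          simp only [Finset.mem_Icc]; omega
        rw [hicc, Finset.prod_insert hnmem, hfil, Finset.prod_insert hk0mem,
          hicc2, Finset.prod_insert hnmem2, Finset.prod_insert hnmem3, ← IH, hci, hkval]
        have : i + 1 + dd ι i = i + dd ι i + 1 := by omega
        rw [this]
        ring
  intro i h1 h2
  have := main (n + 1 - i) (by omega)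
  have hieq : n + 1 - (n + 1 - i) = i := by omega
  rwa [hieq] at this


lemma prod_self_one {α : Type*} (s : Finset α) (f : α → ℤ) (h : ∀ x ∈ s, f x * f x = 1) :
    (∏ x ∈ s, f x) * ∏ x ∈ s, f x = 1 := by
  rw [← Finset.prod_mul_distrib]
  exact Finset.prod_eq_one h

lemma sq_one {b : ℕ → ℤ} (hb : ∀ k, b k = 0 ∨ b k = 1) (x : ℕ) :
    (2 * b x - 1) * (2 * b x - 1) = 1 := by
  rcases hb x with h | h <;> rw [h] <;> ring

lemma star_final {n : ℕ} {b c : ℕ → ℤ} (hm : 1 ≤ m) (hmono : StrictMono ι)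
    (hnc : ∀ (k : ℕ) (hk : k + 1 < m), ι ⟨k, by omega⟩ + 1 < ι ⟨k + 1, hk⟩)
    (hlast1 : ι ⟨m - 1, by omega⟩ = n + m)
    (hb : ∀ k, b k = 0 ∨ b k = 1)
    (hc : MPlusBitsInterface n m hm ι b c) (i : ℕ) (h1 : 1 ≤ i) (h2 : i ≤ n) :
    (∏ k ∈ Finset.Icc i n, (2 * c k - 1))
      = (∏ k ∈ Finset.Icc (i + dd ι i) (n + m), (2 * b k - 1)) *
        ∏ k ∈ Finset.univ.filter (fun k : Fin m => i + dd ι i ≤ ι k), (2 * b (ι k) - 1) := by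
  have hstar := star hm hmono hnc hlast1 hc i h1 (by omega)
  have hsq := prod_self_one (Finset.univ.filter (fun k : Fin m => i + dd ι i ≤ ι k))
    (fun k => 2 * b (ι k) - 1) (fun x _ => sq_one hb (ι x))
  calc (∏ k ∈ Finset.Icc i n, (2 * c k - 1))
      = (∏ k ∈ Finset.Icc i n, (2 * c k - 1)) *
        ((∏ k ∈ Finset.univ.filter (fun k : Fin m => i + dd ι i ≤ ι k), (2 * b (ι k) - 1)) *
         ∏ k ∈ Finset.univ.filter (fun k : Fin m => i + dd ι i ≤ ι k), (2 * b (ι k) - 1)) := by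
        rw [hsq, mul_one]
    _ = _ := by rw [← mul_assoc, hstar]

lemma ghost {n : ℕ} {b : ℕ → ℤ} (hb : ∀ k, b k = 0 ∨ b k = 1) (j : ℕ) (hle : j ≤ n + m) :
    (2 * b j - 1) = (∏ k ∈ Finset.Icc j (n + m), (2 * b k - 1)) *
      (∏ k ∈ Finset.Icc (j + 1) (n + m), (2 * b k - 1)) := by
  have hins : Finset.Icc j (n + m) = insert j (Finset.Icc (j + 1) (n + m)) := by
    ext x; simp only [Finset.mem_Icc, Finset.mem_insert]; omega
  have hnm : j ∉ Finset.Icc (j + 1) (n + m) := by simp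
  rw [hins, Finset.prod_insert hnm, mul_assoc,
    prod_self_one _ _ (fun x _ => sq_one hb x), mul_one]


lemma sum_deg_bound {α : Type*} [DecidableEq α] {mm : ℕ} (s : Finset α) (f : α → ℕ) (a : α)
    (ha : a ∈ s) (h1 : f a ≤ 1) (h2 : ∀ x ∈ s, f x ≤ 2) (hc : s.card ≤ mm) :
    ∑ x ∈ s, f x ≤ 2 * mm - 1 := by
  rw [← Finset.add_sum_erase _ _ ha]
  have hsum : ∑ x ∈ s.erase a, f x ≤ (s.erase a).card * 2 :=
    Finset.sum_le_card_nsmul _ _ _ (fun x hx => h2 x (Finset.mem_of_mem_erase hx))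
  have hcard : (s.erase a).card = s.card - 1 := Finset.card_erase_of_mem ha
  have : 1 ≤ s.card := Finset.card_pos.2 ⟨a, ha⟩
  omega

variable (n : ℕ) (ι : Fin m → ℕ)

noncomputable def rk (hub : ∀ k : Fin m, ι k ≤ n + m) (hnm : 1 ≤ n + m) (k : Fin m) :
    MvPolynomial (Fin (n + m)) ℝ :=
  MvPolynomial.X (⟨ι k - 1, by have := hub k; omega⟩ : Fin (n + m)) *
    (if h : ι k < n + m then MvPolynomial.X (⟨ι k, h⟩ : Fin (n + m)) else 1)

noncomputable def qi (hub : ∀ k : Fin m, ι k ≤ n + m) (hnm : 1 ≤ n + m) (i : ℕ) :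
    MvPolynomial (Fin (n + m)) ℝ :=
  MvPolynomial.X (⟨(i + dd ι i - 1) % (n + m), Nat.mod_lt _ (by omega)⟩ : Fin (n + m)) *
    ∏ k ∈ Finset.univ.filter (fun k : Fin m => i + dd ι i ≤ ι k), rk n ι hub hnm k

lemma rk_deg (hub : ∀ k : Fin m, ι k ≤ n + m) (hnm : 1 ≤ n + m) (k : Fin m) :
    (rk n ι hub hnm k).totalDegree ≤ 2 := by
  unfold rk
  apply le_trans (MvPolynomial.totalDegree_mul _ _)
  rw [MvPolynomial.totalDegree_X]
  split
  · rw [MvPolynomial.totalDegree_X]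
  · rw [MvPolynomial.totalDegree_one]; omega

lemma rk_deg_last (hm : 1 ≤ m) (hub : ∀ k : Fin m, ι k ≤ n + m) (hnm : 1 ≤ n + m)
    (hlast1 : ι ⟨m - 1, by omega⟩ = n + m) :
    (rk n ι hub hnm ⟨m - 1, by omega⟩).totalDegree ≤ 1 := by
  unfold rk
  apply le_trans (MvPolynomial.totalDegree_mul _ _)
  rw [MvPolynomial.totalDegree_X]
  rw [dif_neg (by rw [hlast1]; omega)]
  rw [MvPolynomial.totalDegree_one]

lemma qi_deg (hm : 1 ≤ m) (hub : ∀ k : Fin m, ι k ≤ n + m) (hnm : 1 ≤ n + m)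
    (hlast1 : ι ⟨m - 1, by omega⟩ = n + m) (i : ℕ) (hi : i + dd ι i ≤ n + m) :
    (qi n ι hub hnm i).totalDegree ≤ 2 * m := by
  unfold qi
  apply le_trans (MvPolynomial.totalDegree_mul _ _)
  rw [MvPolynomial.totalDegree_X]
  apply le_trans (Nat.add_le_add_left (MvPolynomial.totalDegree_finset_prod _ _) 1)
  have hmemF : (⟨m - 1, by omega⟩ : Fin m) ∈
      Finset.univ.filter (fun k : Fin m => i + dd ι i ≤ ι k) := by
    simp only [Finset.mem_filter, Finset.mem_univ, true_and, hlast1]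
    exact hi
  have hsum : ∑ k ∈ Finset.univ.filter (fun k : Fin m => i + dd ι i ≤ ι k),
      (rk n ι hub hnm k).totalDegree ≤ 2 * m - 1 := sum_deg_bound (mm := m)
    (Finset.univ.filter (fun k : Fin m => i + dd ι i ≤ ι k))
    (fun k => (rk n ι hub hnm k).totalDegree) _ hmemF
    (rk_deg_last n ι hm hub hnm hlast1)
    (fun x _ => rk_deg n ι hub hnm x)
    (by calc _ ≤ Finset.univ.card := Finset.card_filter_le _ _
        _ = m := by simp)
  omega

lemma rk_eval {b : ℕ → ℤ} (hub : ∀ k : Fin m, ι k ≤ n + m) (hnm : 1 ≤ n + m)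
    (hlb : ∀ k : Fin m, 1 ≤ ι k) (k : Fin m) :
    MvPolynomial.eval
        (fun t : Fin (n + m) =>
          ((∏ l ∈ Finset.Icc ((t : ℕ) + 1) (n + m), (2 * b l - 1) : ℤ) : ℝ))
        (rk n ι hub hnm k)
      = (((∏ l ∈ Finset.Icc (ι k) (n + m), (2 * b l - 1)) *
          (∏ l ∈ Finset.Icc (ι k + 1) (n + m), (2 * b l - 1)) : ℤ) : ℝ) := by
  unfold rk
  rw [map_mul, MvPolynomial.eval_X, Int.cast_mul]
  congr 1
  · show ((∏ l ∈ Finset.Icc ((ι k - 1) + 1) (n + m), (2 * b l - 1) : ℤ) : ℝ) = _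
    rw [show ι k - 1 + 1 = ι k from by have := hlb k; omega]
  · split
    · rw [MvPolynomial.eval_X]
    · rw [map_one]
      have h2 : ι k = n + m := by have := hub k; omega
      rw [h2, Finset.Icc_eq_empty (by omega), Finset.prod_empty, Int.cast_one]

lemma qi_eval {b : ℕ → ℤ} (hub : ∀ k : Fin m, ι k ≤ n + m) (hnm : 1 ≤ n + m)
    (hlb : ∀ k : Fin m, 1 ≤ ι k) (i : ℕ) (hi1 : 1 ≤ i) (hi : i + dd ι i ≤ n + m) :
    MvPolynomial.eval
        (fun t : Fin (n + m) =>
          ((∏ l ∈ Finset.Icc ((t : ℕ) + 1) (n + m), (2 * b l - 1) : ℤ) : ℝ))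
        (qi n ι hub hnm i)
      = (((∏ l ∈ Finset.Icc (i + dd ι i) (n + m), (2 * b l - 1)) *
          ∏ k ∈ Finset.univ.filter (fun k : Fin m => i + dd ι i ≤ ι k),
            ((∏ l ∈ Finset.Icc (ι k) (n + m), (2 * b l - 1)) *
             (∏ l ∈ Finset.Icc (ι k + 1) (n + m), (2 * b l - 1))) : ℤ) : ℝ) := by
  unfold qi
  rw [map_mul, MvPolynomial.eval_X, map_prod, Int.cast_mul]
  congr 1
  · show ((∏ l ∈ Finset.Icc ((i + dd ι i - 1) % (n + m) + 1) (n + m), (2 * b l - 1) : ℤ) : ℝ) = _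
    rw [Nat.mod_eq_of_lt (by omega), show i + dd ι i - 1 + 1 = i + dd ι i by omega]
  · rw [Int.cast_prod]
    apply Finset.prod_congr rfl
    intro k _
    rw [rk_eval n ι hub hnm hlb k]

end Stmt8Aux

open Stmt8Aux

/-- Theorem 1, case i_m = n + m: if no two ghost positions are
consecutive, the argument of the sign function in the APUF response model is,
as a function of the observable feature vector `(φ(1), ..., φ(n+m))`, given by
a multivariate polynomial of total degree at most `2m` (case `i_m = n + m`). -/
theorem stmt8 (n m : ℕ) (hn : 1 ≤ n) (hm : 1 ≤ m)
    (ι : Fin m → ℕ) (hmono : StrictMono ι)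
    (hfirst : 1 ≤ ι ⟨0, hm⟩) (hlast : ι ⟨m - 1, by omega⟩ ≤ n + m)
    (hnc : ∀ k (hk : k + 1 ≤ m - 1), ι ⟨k, by omega⟩ + 1 < ι ⟨k + 1, by omega⟩)
    (hlast1 : ι ⟨m - 1, by omega⟩ = n + m) :
    ∀ (v : ℝ) (w : ℕ → ℝ),
      ∃ p : MvPolynomial (Fin (n + m)) ℝ,
        p.totalDegree ≤ 2 * m ∧
        ∀ (b c : ℕ → ℤ), (∀ k, b k = 0 ∨ b k = 1) →
          MPlusBitsInterface n m hm ι b c →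
          v + ∑ i ∈ Finset.Icc 1 n,
              w i * ((∏ k ∈ Finset.Icc i n, (2 * c k - 1) : ℤ) : ℝ)
            = MvPolynomial.eval
                (fun t : Fin (n + m) =>
                  ((∏ k ∈ Finset.Icc ((t : ℕ) + 1) (n + m), (2 * b k - 1) : ℤ) : ℝ))
                p := by
  intro v w
  have hnc' : ∀ (k : ℕ) (hk : k + 1 < m), ι ⟨k, by omega⟩ + 1 < ι ⟨k + 1, hk⟩ := by
    intro k hk
    exact hnc k (by omega)
  have hub : ∀ k : Fin m, ι k ≤ n + m := by
    intro k
    have hle : k ≤ (⟨m - 1, by omega⟩ : Fin m) := by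
      rw [Fin.le_def]; simp only [Fin.val_mk]; have := k.isLt; omega
    have := hmono.monotone hle
    omega
  have hlb : ∀ k : Fin m, 1 ≤ ι k := by
    intro k
    have hle : (⟨0, hm⟩ : Fin m) ≤ k := by
      rw [Fin.le_def]; simp only [Fin.val_mk]; omega
    have := hmono.monotone hle
    omega
  have hnm : 1 ≤ n + m := by omega
  refine ⟨MvPolynomial.C v + ∑ i ∈ Finset.Icc 1 n,
      MvPolynomial.C (w i) * qi n ι hub hnm i, ?_, ?_⟩
  · apply le_trans (MvPolynomial.totalDegree_add _ _)
    apply max_le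
    · simp
    apply le_trans (MvPolynomial.totalDegree_finset_sum _ _)
    apply Finset.sup_le
    intro i hi
    simp only [Finset.mem_Icc] at hi
    apply le_trans (MvPolynomial.totalDegree_mul _ _)
    rw [MvPolynomial.totalDegree_C]
    have := qi_deg n ι hm hub hnm hlast1 i (by have := dd_le ι i; omega)
    omega
  · intro b c hb hc
    rw [map_add, map_sum, MvPolynomial.eval_C]
    congr 1
    apply Finset.sum_congr rfl
    intro i hi
    simp only [Finset.mem_Icc] at hi
    rw [map_mul, MvPolynomial.eval_C]
    congr 1
    have hdle : dd ι i ≤ m := dd_le ι i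
    rw [qi_eval n ι hub hnm hlb i hi.1 (by omega)]
    have key := star_final hm hmono hnc' hlast1 hb hc i hi.1 hi.2
    have key2 : (∏ k ∈ Finset.Icc i n, (2 * c k - 1))
        = (∏ l ∈ Finset.Icc (i + dd ι i) (n + m), (2 * b l - 1)) *
          ∏ k ∈ Finset.univ.filter (fun k : Fin m => i + dd ι i ≤ ι k),
            ((∏ l ∈ Finset.Icc (ι k) (n + m), (2 * b l - 1)) *
             (∏ l ∈ Finset.Icc (ι k + 1) (n + m), (2 * b l - 1))) := by
      rw [key]
      congr 1
      apply Finset.prod_congr rfl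
      intro k _
      exact ghost hb (ι k) (hub k)
    rw [key2]
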